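/- For an invertible polynomial ensemble (φ_l(x) = φ(a_l, x) with monic polynomials π_k(a) = ∫_I x^k φ(a,x) dx), the normalizing partition function is Z_N = N! · Δ_N(a_1,...,a_N). -/

import Mathlib

open MeasureTheory

/-- The Vandermonde determinant in product form (real variables). -/
def VandR {K : ℕ} (v : Fin K → ℝ) : ℝ := ∏ i : Fin K, ∏ j ∈ Finset.Ioi i, (v i - v j)

theorem my_integral_pi_prod : ∀ (n : ℕ) (μ : Fin n → Measure ℝ),
    (∀ i, SigmaFinite (μ i)) → ∀ (f : Fin n → ℝ → ℝ),
    ∫ x : Fin n → ℝ, ∏ i, f i (x i) ∂Measure.pi μ = ∏ i, ∫ x, f i x ∂(μ i) := by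
  intro n
  induction n with
  | zero =>
      intro μ _ f
      simp [integral_const]
      rw [Measure.pi_of_empty]
      simp
  | succ n ih =>
      intro μ hσ f
      have := hσ
      calc
        ∫ x : Fin (n+1) → ℝ, ∏ i, f i (x i) ∂Measure.pi μ
            = ∫ z : ℝ × (Fin n → ℝ), f 0 z.1 * ∏ i : Fin n, f (Fin.succ i) (z.2 i)
              ∂((μ 0).prod (Measure.pi fun j => μ (Fin.succ j))) := by
          rw [show (Measure.pi fun j : Fin n => μ (Fin.succ j))
              = Measure.pi fun j : Fin n => μ (Fin.succAbove 0 j) by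
            simp [Fin.zero_succAbove]]
          rw [← ((measurePreserving_piFinSuccAbove μ 0).symm).integral_comp']
          simp_rw [MeasurableEquiv.piFinSuccAbove_symm_apply, Fin.insertNthEquiv,
            Fin.prod_univ_succ, Fin.insertNth_zero, Equiv.coe_fn_mk, Fin.cons_succ,
            Fin.zero_succAbove, Fin.cons_zero, cast_eq]
        _ = (∫ x, f 0 x ∂(μ 0)) * ∏ i : Fin n, ∫ x, f (Fin.succ i) x ∂(μ (Fin.succ i)) := by
          rw [show (∫ z : ℝ × (Fin n → ℝ), f 0 z.1 * ∏ i : Fin n, f (Fin.succ i) (z.2 i)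
              ∂((μ 0).prod (Measure.pi fun j => μ (Fin.succ j))))
              = (∫ x, f 0 x ∂(μ 0)) * ∫ y : Fin n → ℝ, ∏ i : Fin n, f (Fin.succ i) (y i)
                ∂(Measure.pi fun j => μ (Fin.succ j)) from integral_prod_mul (f 0) (fun y : Fin n → ℝ => ∏ i : Fin n, f (Fin.succ i) (y i)),
            ih (fun j => μ (Fin.succ j)) (fun j => hσ _) (fun j => f (Fin.succ j))]
        _ = ∏ i, ∫ x, f i x ∂(μ i) := by rw [Fin.prod_univ_succ]

theorem my_integrable_pi_prod : ∀ (n : ℕ) (μ : Fin n → Measure ℝ),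
    (∀ i, SigmaFinite (μ i)) → ∀ (f : Fin n → ℝ → ℝ),
    (∀ i, Integrable (f i) (μ i)) →
    Integrable (fun x : Fin n → ℝ => ∏ i, f i (x i)) (Measure.pi μ) := by
  intro n
  induction n with
  | zero =>
      intro μ _ f _
      simp only [Finset.univ_eq_empty, Finset.prod_empty]
      rw [Measure.pi_of_empty]
      exact integrable_const 1
  | succ n ih =>
      intro μ hσ f hf
      have := hσ
      have key : Integrable (fun z : ℝ × (Fin n → ℝ) =>
          f 0 z.1 * ∏ i : Fin n, f (Fin.succ i) (z.2 i))
          ((μ 0).prod (Measure.pi fun j => μ (Fin.succAbove 0 j))) := by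
        have h2 : Integrable (fun y : Fin n → ℝ => ∏ i : Fin n, f (Fin.succ i) (y i))
            (Measure.pi fun j => μ (Fin.succAbove 0 j)) := by
          rw [show (Measure.pi fun j : Fin n => μ (Fin.succAbove 0 j))
              = Measure.pi fun j : Fin n => μ (Fin.succ j) by simp [Fin.zero_succAbove]]
          exact ih (fun j => μ (Fin.succ j)) (fun j => hσ _) (fun j => f (Fin.succ j))
            (fun j => hf _)
        exact (hf 0).mul_prod h2
      have h3 := ((measurePreserving_piFinSuccAbove μ 0).integrable_comp_emb
        (MeasurableEquiv.measurableEmbedding _)).2 key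
      have h4 : ((fun z : ℝ × (Fin n → ℝ) =>
          f 0 z.1 * ∏ i : Fin n, f (Fin.succ i) (z.2 i))
          ∘ (MeasurableEquiv.piFinSuccAbove (fun _ : Fin (n+1) => ℝ) 0))
          = fun x : Fin (n+1) → ℝ => ∏ i, f i (x i) := by
        funext x
        simp [MeasurableEquiv.piFinSuccAbove, Fin.prod_univ_succ, Fin.zero_succAbove,
          Fin.tail, Function.comp_def]
      rwa [h4] at h3

theorem my_andreief (N : ℕ) (μ : Measure ℝ) [SigmaFinite μ] (f g : Fin N → ℝ → ℝ)
    (hfg : ∀ i j, Integrable (fun x => f i x * g j x) μ) :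
    ∫ x : Fin N → ℝ, (Matrix.of fun k i : Fin N => f i (x k)).det *
      (Matrix.of fun k l : Fin N => g l (x k)).det ∂(Measure.pi fun _ => μ)
    = N.factorial * (Matrix.of fun i j : Fin N => ∫ x, f i x * g j x ∂μ).det := by
  classical
  set s : Equiv.Perm (Fin N) → ℝ := fun σ => ((Equiv.Perm.sign σ : ℤ) : ℝ) with hs
  set A : Matrix (Fin N) (Fin N) ℝ := Matrix.of fun i j => ∫ x, f i x * g j x ∂μ with hA
  have hss : ∀ σ : Equiv.Perm (Fin N), s σ * s σ = 1 := by
    intro σ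
    have h := Int.units_mul_self (Equiv.Perm.sign σ)
    simp only [hs, ← Int.cast_mul, ← Units.val_mul, h, Units.val_one, Int.cast_one]
  have expand : ∀ x : Fin N → ℝ,
      (Matrix.of fun k i : Fin N => f i (x k)).det *
      (Matrix.of fun k l : Fin N => g l (x k)).det
      = ∑ σ : Equiv.Perm (Fin N), ∑ τ : Equiv.Perm (Fin N),
          s σ * s τ * ∏ k, (f (σ⁻¹ k) (x k) * g (τ⁻¹ k) (x k)) := by
    intro x
    rw [Matrix.det_apply', Matrix.det_apply', Finset.sum_mul_sum]
    refine Finset.sum_congr rfl fun σ _ => Finset.sum_congr rfl fun τ _ => ?_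
    have h1 : ∏ i, f i (x (σ i)) = ∏ k, f (σ⁻¹ k) (x k) := by
      rw [← Equiv.prod_comp σ (fun k => f (σ⁻¹ k) (x k))]
      simp
    have h2 : ∏ i, g i (x (τ i)) = ∏ k, g (τ⁻¹ k) (x k) := by
      rw [← Equiv.prod_comp τ (fun k => g (τ⁻¹ k) (x k))]
      simp
    simp only [Matrix.of_apply, Finset.prod_mul_distrib, h1, h2, hs]
    ring
  have hterm : ∀ σ τ : Equiv.Perm (Fin N),
      Integrable (fun x : Fin N → ℝ => s σ * s τ *
        ∏ k, (f (σ⁻¹ k) (x k) * g (τ⁻¹ k) (x k))) (Measure.pi fun _ => μ) := by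
    intro σ τ
    exact (my_integrable_pi_prod N (fun _ => μ) (fun _ => inferInstance)
      (fun k x => f (σ⁻¹ k) x * g (τ⁻¹ k) x) (fun k => hfg _ _)).const_mul _
  calc
    ∫ x : Fin N → ℝ, (Matrix.of fun k i : Fin N => f i (x k)).det *
        (Matrix.of fun k l : Fin N => g l (x k)).det ∂(Measure.pi fun _ => μ)
        = ∫ x : Fin N → ℝ, ∑ σ : Equiv.Perm (Fin N), ∑ τ : Equiv.Perm (Fin N),
            s σ * s τ * ∏ k, (f (σ⁻¹ k) (x k) * g (τ⁻¹ k) (x k))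
            ∂(Measure.pi fun _ => μ) := by
      exact integral_congr_ae (Filter.Eventually.of_forall expand)
    _ = ∑ σ : Equiv.Perm (Fin N), ∑ τ : Equiv.Perm (Fin N),
          ∫ x : Fin N → ℝ, s σ * s τ * ∏ k, (f (σ⁻¹ k) (x k) * g (τ⁻¹ k) (x k))
          ∂(Measure.pi fun _ => μ) := by
      rw [integral_finset_sum _ (fun σ _ => integrable_finset_sum _ (fun τ _ => hterm σ τ))]
      exact Finset.sum_congr rfl fun σ _ =>
        integral_finset_sum _ (fun τ _ => hterm σ τ)
    _ = ∑ σ : Equiv.Perm (Fin N), ∑ τ : Equiv.Perm (Fin N),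
          s σ * s τ * ∏ k, A (σ⁻¹ k) (τ⁻¹ k) := by
      refine Finset.sum_congr rfl fun σ _ => Finset.sum_congr rfl fun τ _ => ?_
      rw [integral_const_mul, my_integral_pi_prod N (fun _ => μ) (fun _ => inferInstance)
        (fun k x => f (σ⁻¹ k) x * g (τ⁻¹ k) x)]
      rfl
    _ = ∑ σ : Equiv.Perm (Fin N), ∑ τ : Equiv.Perm (Fin N),
          s σ * s τ * ∏ k, A (σ k) (τ k) := by
      refine Finset.sum_equiv (Equiv.inv (Equiv.Perm (Fin N))) (by simp) ?_
      intro σ _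
      refine Finset.sum_equiv (Equiv.inv (Equiv.Perm (Fin N))) (by simp) ?_
      intro τ _
      simp [hs, Equiv.Perm.sign_inv]
    _ = ∑ σ : Equiv.Perm (Fin N), ∑ τ : Equiv.Perm (Fin N),
          s τ * ∏ m, A m (τ m) := by
      refine Finset.sum_congr rfl fun σ _ => ?_
      refine Finset.sum_equiv (Equiv.mulRight σ⁻¹) (by simp) ?_
      intro τ _
      have hp : ∏ m, A m ((τ * σ⁻¹) m) = ∏ k, A (σ k) (τ k) := by
        rw [← Equiv.prod_comp σ (fun m => A m ((τ * σ⁻¹) m))]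
        simp [Equiv.Perm.mul_apply]
      have hsgn : s (τ * σ⁻¹) = s τ * s σ := by
        simp [hs, Equiv.Perm.sign_mul, Equiv.Perm.sign_inv, Units.val_mul, Int.cast_mul]
      show s σ * s τ * ∏ k, A (σ k) (τ k) = s (τ * σ⁻¹) * ∏ m, A m ((τ * σ⁻¹) m)
      rw [hp, hsgn]
      ring
    _ = N.factorial * A.det := by
      rw [Finset.sum_const, ← Matrix.det_transpose A, Matrix.det_apply']
      simp only [Finset.card_univ, Fintype.card_perm, Fintype.card_fin, nsmul_eq_mul,
        Matrix.transpose_apply, hs]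

theorem my_vandR_eq {K : ℕ} (v : Fin K → ℝ) :
    VandR v = (∏ i : Fin K, ∏ _j ∈ Finset.Ioi i, (-1:ℝ)) * (Matrix.vandermonde v).det := by
  rw [Matrix.det_vandermonde, VandR, ← Finset.prod_mul_distrib]
  refine Finset.prod_congr rfl fun i _ => ?_
  rw [← Finset.prod_mul_distrib]
  exact Finset.prod_congr rfl fun j _ => by ring

/-- for an invertible polynomial ensemble, i.e. a polynomial ensemble with
`φ_l(x) = φ(a_l, x)` for pairwise distinct real parameters `a_1, ..., a_N` such that
`π_k(a) = ∫_I x^k φ(a,x) dx` is a monic polynomial of degree `k` in `a` for every `k ≥ 0`,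
the normalizing partition function
`Z_N = ∫_{I^N} Δ_N(x) det[φ(a_l, x_k)] dx` equals `N! · Δ_N(a_1,...,a_N)`. -/
theorem invertible_ensemble_partition_function (N : ℕ) (I : Set ℝ) (hI : MeasurableSet I)
    (φ : ℝ → ℝ → ℝ) (a : Fin N → ℝ) (ha : Function.Injective a)
    (p : ℕ → Polynomial ℝ) (hmonic : ∀ k, (p k).Monic) (hdeg : ∀ k, (p k).natDegree = k)
    (hrep : ∀ (k : ℕ) (b : ℝ), (p k).eval b = ∫ x in I, x ^ k * φ b x)
    (hmom : ∀ (k : ℕ) (l : Fin N), IntegrableOn (fun x => x ^ k * φ (a l) x) I)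
    (hint : Integrable
      (fun x : Fin N → ℝ =>
        VandR x * Matrix.det (Matrix.of fun k l : Fin N => φ (a l) (x k)))
      (Measure.pi fun _ => volume.restrict I)) :
    (∫ x : Fin N → ℝ,
        VandR x * Matrix.det (Matrix.of fun k l : Fin N => φ (a l) (x k))
        ∂(Measure.pi fun _ => volume.restrict I))
      = N.factorial * VandR a := by
  classical
  set c : ℝ := ∏ i : Fin N, ∏ _j ∈ Finset.Ioi i, (-1:ℝ) with hc
  have hand := my_andreief N (volume.restrict I)
    (fun i y => y ^ (i : ℕ)) (fun l y => φ (a l) y)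
    (fun i l => hmom (i : ℕ) l)
  have hAeq : (Matrix.of fun i j : Fin N =>
      ∫ x, x ^ (i : ℕ) * φ (a j) x ∂(volume.restrict I))
      = (Matrix.of fun i j : Fin N => (p (j : ℕ)).eval (a i)).transpose := by
    ext i j
    simp only [Matrix.of_apply, Matrix.transpose_apply, hrep (i : ℕ) (a j)]
  have hdet : (Matrix.of fun i j : Fin N =>
      ∫ x, x ^ (i : ℕ) * φ (a j) x ∂(volume.restrict I)).det
      = (Matrix.vandermonde a).det := by
    rw [hAeq, Matrix.det_transpose,
      ← Matrix.det_eval_matrixOfPolynomials_eq_det_vandermonde a (fun j : Fin N => p (j : ℕ))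
        (fun j => hdeg (j : ℕ)) (fun j => hmonic (j : ℕ))]
  have hintegrand : ∀ x : Fin N → ℝ,
      VandR x * Matrix.det (Matrix.of fun k l : Fin N => φ (a l) (x k))
      = c * ((Matrix.of fun k i : Fin N => x k ^ (i : ℕ)).det *
          (Matrix.of fun k l : Fin N => φ (a l) (x k)).det) := by
    intro x
    rw [my_vandR_eq x]
    rw [show Matrix.vandermonde x = Matrix.of fun k i : Fin N => x k ^ (i : ℕ) from rfl]
    ring
  calc
    (∫ x : Fin N → ℝ,
        VandR x * Matrix.det (Matrix.of fun k l : Fin N => φ (a l) (x k))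
        ∂(Measure.pi fun _ => volume.restrict I))
        = ∫ x : Fin N → ℝ, c * ((Matrix.of fun k i : Fin N => x k ^ (i : ℕ)).det *
            (Matrix.of fun k l : Fin N => φ (a l) (x k)).det)
            ∂(Measure.pi fun _ => volume.restrict I) := by
      exact integral_congr_ae (Filter.Eventually.of_forall hintegrand)
    _ = c * ∫ x : Fin N → ℝ, (Matrix.of fun k i : Fin N => x k ^ (i : ℕ)).det *
            (Matrix.of fun k l : Fin N => φ (a l) (x k)).det
            ∂(Measure.pi fun _ => volume.restrict I) := integral_const_mul c _
    _ = c * (N.factorial * (Matrix.of fun i j : Fin N =>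
            ∫ x, x ^ (i : ℕ) * φ (a j) x ∂(volume.restrict I)).det) := by rw [hand]
    _ = N.factorial * (c * (Matrix.vandermonde a).det) := by rw [hdet]; ring
    _ = N.factorial * VandR a := by rw [← my_vandR_eq a]
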